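/- Let F_1 = l_1 - l_2 and F_2 = l_2 - l_3 (two (-2)-classes with ⟨F_1, F_2⟩ = 1). The number of (-1)-classes D among the 56 with ⟨D, F_1⟩ = 0 and ⟨D, F_2⟩ = 0 is exactly 20. -/

import Mathlib

set_option maxHeartbeats 1000000

/-- The intersection form of signature (1,7) on the Picard lattice `ℤ⁸`
of a degree-2 weak Del Pezzo surface. -/
def dpForm (x y : Fin 8 → ℤ) : ℤ :=
  x 0 * y 0 - ∑ i : Fin 7, x i.succ * y i.succ

/-- The canonical class `K = (-3, 1, 1, 1, 1, 1, 1, 1)`. -/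
def dpK : Fin 8 → ℤ := ![-3, 1, 1, 1, 1, 1, 1, 1]

/-- The basis classes `l i` (`l 0` the line class, `l i` the exceptional classes). -/
def l (i : Fin 8) : Fin 8 → ℤ := Pi.single i 1

/-- A `(-1)`-class: `D² = -1`, `⟨D, K⟩ = -1`, nonnegative leading coefficient. -/
def IsMinusOneClass (D : Fin 8 → ℤ) : Prop :=
  dpForm D D = -1 ∧ dpForm D dpK = -1 ∧ 0 ≤ D 0

/-- A `(-2)`-class: `F² = -2`, `⟨F, K⟩ = 0`, nonnegative leading coefficient. -/
def IsMinusTwoClass (F : Fin 8 → ℤ) : Prop :=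
  dpForm F F = -2 ∧ dpForm F dpK = 0 ∧ 0 ≤ F 0

lemma aux_succ_mul_nonneg (x : ℤ) : 0 ≤ x * (x + 1) := by
  rcases le_or_gt 0 x with h | h
  · positivity
  · have h1 : x + 1 ≤ 0 := by omega
    nlinarith

/-- The explicit list of the 20 classes. -/
def dpT : Finset (Fin 8 → ℤ) := {![0,0,0,0,1,0,0,0], ![0,0,0,0,0,1,0,0], ![0,0,0,0,0,0,1,0], ![0,0,0,0,0,0,0,1], ![1,0,0,0,-1,-1,0,0], ![1,0,0,0,-1,0,-1,0], ![1,0,0,0,-1,0,0,-1], ![1,0,0,0,0,-1,-1,0], ![1,0,0,0,0,-1,0,-1], ![1,0,0,0,0,0,-1,-1], ![2,-1,-1,-1,0,0,-1,-1], ![2,-1,-1,-1,0,-1,0,-1], ![2,-1,-1,-1,0,-1,-1,0], ![2,-1,-1,-1,-1,0,0,-1], ![2,-1,-1,-1,-1,0,-1,0], ![2,-1,-1,-1,-1,-1,0,0], ![3,-1,-1,-1,-2,-1,-1,-1], ![3,-1,-1,-1,-1,-2,-1,-1], ![3,-1,-1,-1,-1,-1,-2,-1], ![3,-1,-1,-1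,-1,-1,-1,-2]}

lemma aux_forward (D : Fin 8 → ℤ)
    (h : IsMinusOneClass D ∧ dpForm D (l 1 - l 2) = 0 ∧ dpForm D (l 2 - l 3) = 0) :
    D = ![0,0,0,0,1,0,0,0] ∨
    D = ![0,0,0,0,0,1,0,0] ∨
    D = ![0,0,0,0,0,0,1,0] ∨
    D = ![0,0,0,0,0,0,0,1] ∨
    D = ![1,0,0,0,-1,-1,0,0] ∨
    D = ![1,0,0,0,-1,0,-1,0] ∨
    D = ![1,0,0,0,-1,0,0,-1] ∨
    D = ![1,0,0,0,0,-1,-1,0] ∨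
    D = ![1,0,0,0,0,-1,0,-1] ∨
    D = ![1,0,0,0,0,0,-1,-1] ∨
    D = ![2,-1,-1,-1,0,0,-1,-1] ∨
    D = ![2,-1,-1,-1,0,-1,0,-1] ∨
    D = ![2,-1,-1,-1,0,-1,-1,0] ∨
    D = ![2,-1,-1,-1,-1,0,0,-1] ∨
    D = ![2,-1,-1,-1,-1,0,-1,0] ∨
    D = ![2,-1,-1,-1,-1,-1,0,0] ∨
    D = ![3,-1,-1,-1,-2,-1,-1,-1] ∨
    D = ![3,-1,-1,-1,-1,-2,-1,-1] ∨
    D = ![3,-1,-1,-1,-1,-1,-2,-1] ∨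
    D = ![3,-1,-1,-1,-1,-1,-1,-2] := by
  obtain ⟨⟨h1, h2, h3⟩, h4, h5⟩ := h
  simp only [dpForm, dpK, l, Fin.sum_univ_seven] at h1 h2 h4 h5
  norm_num [Pi.single_apply, Fin.succ, Fin.ext_iff, show ((3:Fin 8):ℕ) = 3 from rfl,
    show ((2:Fin 8):ℕ) = 2 from rfl, show ((1:Fin 8):ℕ) = 1 from rfl] at h1 h2 h4 h5
  simp only [show (⟨2, by norm_num⟩ : Fin 8) = 2 from rfl, show (⟨3, by norm_num⟩ : Fin 8) = 3 from rfl,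
    show (⟨4, by norm_num⟩ : Fin 8) = 4 from rfl, show (⟨5, by norm_num⟩ : Fin 8) = 5 from rfl,
    show (⟨6, by norm_num⟩ : Fin 8) = 6 from rfl, show (⟨7, by norm_num⟩ : Fin 8) = 7 from rfl]
    at h1 h2 h4 h5
  have e2 : D 2 = D 1 := by omega
  have e3 : D 3 = D 1 := by omega
  rw [e2, e3] at h1 h2
  have hDv : D = ![D 0, D 1, D 1, D 1, D 4, D 5, D 6, D 7] := by
    funext i
    fin_cases i <;> first | rfl | exact e2 | exact e3
  rw [hDv]
  simp only [Matrix.vecCons, Fin.cons_inj, and_true, eq_self_iff_true]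
  clear hDv e2 e3 h4 h5
  generalize hg0 : D 0 = d at h1 h2 h3
  generalize hg1 : D 1 = t at h1 h2
  generalize hg4 : D 4 = b at h1 h2
  generalize hg5 : D 5 = c at h1 h2
  generalize hg6 : D 6 = e at h1 h2
  generalize hg7 : D 7 = g at h1 h2
  -- bound d ≤ 3 by Cauchy-Schwarz
  have hs : t + t + t + b + c + e + g = 1 - 3 * d := by omega
  have hsq := congrArg (fun x => x * x) hs
  have hd3 : d ≤ 3 := by
    by_contra hd
    push_neg at hd
    linarith [sq_nonneg (t-b), sq_nonneg (t-c), sq_nonneg (t-e), sq_nonneg (t-g),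
      sq_nonneg (b-c), sq_nonneg (b-e), sq_nonneg (b-g), sq_nonneg (c-e), sq_nonneg (c-g),
      sq_nonneg (e-g), sq_nonneg (d-4), hsq, h1]
  have hdd : d * (d - 3) ≤ 0 := mul_nonpos_of_nonneg_of_nonpos h3 (by omega)
  have ht0 := aux_succ_mul_nonneg t
  have hb0 := aux_succ_mul_nonneg b
  have hc0 := aux_succ_mul_nonneg c
  have he0 := aux_succ_mul_nonneg e
  have hg0 := aux_succ_mul_nonneg g
  have ht2 : 3 * (t * (t + 1)) ≤ 2 := by linarith [hb0, hc0, he0, hg0, hdd, h1, h2]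
  have hb2 : b * (b + 1) ≤ 2 := by linarith [ht0, hc0, he0, hg0, hdd, h1, h2]
  have hc2 : c * (c + 1) ≤ 2 := by linarith [ht0, hb0, he0, hg0, hdd, h1, h2]
  have he2 : e * (e + 1) ≤ 2 := by linarith [ht0, hb0, hc0, hg0, hdd, h1, h2]
  have hg2 : g * (g + 1) ≤ 2 := by linarith [ht0, hb0, hc0, he0, hdd, h1, h2]
  have htr : -1 ≤ t ∧ t ≤ 0 := by
    have u1 : -3*t ≤ 5 := by linarith [sq_nonneg (t+1), ht2]
    have u2 : 3*t ≤ 2 := by linarith [sq_nonneg t, ht2]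
    omega
  have hbr : -2 ≤ b ∧ b ≤ 1 :=
    ⟨by linarith [sq_nonneg (b+2), hb2], by linarith [sq_nonneg (b-1), hb2]⟩
  have hcr : -2 ≤ c ∧ c ≤ 1 :=
    ⟨by linarith [sq_nonneg (c+2), hc2], by linarith [sq_nonneg (c-1), hc2]⟩
  have her : -2 ≤ e ∧ e ≤ 1 :=
    ⟨by linarith [sq_nonneg (e+2), he2], by linarith [sq_nonneg (e-1), he2]⟩
  have hgr : -2 ≤ g ∧ g ≤ 1 :=
    ⟨by linarith [sq_nonneg (g+2), hg2], by linarith [sq_nonneg (g-1), hg2]⟩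
  obtain ⟨htl, htu⟩ := htr
  obtain ⟨hbl, hbu⟩ := hbr
  obtain ⟨hcl, hcu⟩ := hcr
  obtain ⟨hel, heu⟩ := her
  obtain ⟨hgl, hgu⟩ := hgr
  obtain ⟨sd, hsd⟩ : ∃ y, d*d = y := ⟨_, rfl⟩
  obtain ⟨st, hst⟩ : ∃ y, t*t = y := ⟨_, rfl⟩
  obtain ⟨sb, hsb⟩ : ∃ y, b*b = y := ⟨_, rfl⟩
  obtain ⟨sc, hsc⟩ : ∃ y, c*c = y := ⟨_, rfl⟩
  obtain ⟨se, hse⟩ : ∃ y, e*e = y := ⟨_, rfl⟩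
  obtain ⟨sg, hsg⟩ : ∃ y, g*g = y := ⟨_, rfl⟩
  rw [hsd, hst, hsb, hsc, hse, hsg] at h1
  have qd : (d = 0 ∧ sd = 0) ∨ (d = 1 ∧ sd = 1) ∨ (d = 2 ∧ sd = 4) ∨ (d = 3 ∧ sd = 9) := by
    interval_cases d <;> omega
  have qt : (t = -1 ∧ st = 1) ∨ (t = 0 ∧ st = 0) := by
    interval_cases t <;> omega
  have qb : (b = -2 ∧ sb = 4) ∨ (b = -1 ∧ sb = 1) ∨ (b = 0 ∧ sb = 0) ∨ (b = 1 ∧ sb = 1) := by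
    interval_cases b <;> omega
  have qc : (c = -2 ∧ sc = 4) ∨ (c = -1 ∧ sc = 1) ∨ (c = 0 ∧ sc = 0) ∨ (c = 1 ∧ sc = 1) := by
    interval_cases c <;> omega
  have qe : (e = -2 ∧ se = 4) ∨ (e = -1 ∧ se = 1) ∨ (e = 0 ∧ se = 0) ∨ (e = 1 ∧ se = 1) := by
    interval_cases e <;> omega
  have qg : (g = -2 ∧ sg = 4) ∨ (g = -1 ∧ sg = 1) ∨ (g = 0 ∧ sg = 0) ∨ (g = 1 ∧ sg = 1) := by
    interval_cases g <;> omega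
  clear hsd hst hsb hsc hse hsg hdd ht0 hb0 hc0 he0 hg0 ht2 hb2 hc2 he2 hg2 hsq
  rcases qd with ⟨rfl, rfl⟩ | ⟨rfl, rfl⟩ | ⟨rfl, rfl⟩ | ⟨rfl, rfl⟩ <;>
    rcases qt with ⟨rfl, rfl⟩ | ⟨rfl, rfl⟩ <;>
      rcases qb with ⟨rfl, rfl⟩ | ⟨rfl, rfl⟩ | ⟨rfl, rfl⟩ | ⟨rfl, rfl⟩ <;>
        rcases qc with ⟨rfl, rfl⟩ | ⟨rfl, rfl⟩ | ⟨rfl, rfl⟩ | ⟨rfl, rfl⟩ <;>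
          rcases qe with ⟨rfl, rfl⟩ | ⟨rfl, rfl⟩ | ⟨rfl, rfl⟩ | ⟨rfl, rfl⟩ <;>
            rcases qg with ⟨rfl, rfl⟩ | ⟨rfl, rfl⟩ | ⟨rfl, rfl⟩ | ⟨rfl, rfl⟩ <;>
              first | (exfalso; omega) | norm_num

/-- For the `(-2)`-classes `F₁ = l 1 - l 2` and `F₂ = l 2 - l 3`, exactly `20` of the
`56` `(-1)`-classes `D` satisfy `⟨D, F₁⟩ = 0` and `⟨D, F₂⟩ = 0`. -/
theorem card_minusOneClasses_A2 :
    ({D : Fin 8 → ℤ | IsMinusOneClass D ∧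
        dpForm D (l 1 - l 2) = 0 ∧ dpForm D (l 2 - l 3) = 0} :
        Set (Fin 8 → ℤ)).ncard = 20 := by
  classical
  have hset : ({D : Fin 8 → ℤ | IsMinusOneClass D ∧
        dpForm D (l 1 - l 2) = 0 ∧ dpForm D (l 2 - l 3) = 0} :
        Set (Fin 8 → ℤ)) = ↑dpT := by
    ext D
    simp only [Set.mem_setOf_eq, dpT, Finset.coe_insert, Set.mem_insert_iff,
      Finset.coe_singleton, Set.mem_singleton_iff]
    constructor
    · exact aux_forward D
    · rintro (rfl|rfl|rfl|rfl|rfl|rfl|rfl|rfl|rfl|rfl|rfl|rfl|rfl|rfl|rfl|rfl|rfl|rfl|rfl|rfl) <;>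
        · unfold IsMinusOneClass dpForm dpK l
          decide
  rw [hset, Set.ncard_coe_finset]
  decide
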